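/- Let X be a finite-dimensional normed space of dimension ≥ 2, C ⊆ X an unbounded convex body with no asymptotic directions, and h a nonzero continuous linear functional bounded below on C. Then for every α ∈ ℝ the sublevel set {x ∈ C : h(x) ≤ α} is bounded. -/

import Mathlib

open Filter Metric Set Topology

/-- `v` is an asymptotic direction of the closed convex set `C`. -/
def IsAsymptoticDir {X : Type*} [NormedAddCommGroup X] [NormedSpace ℝ X]
    (C : Set X) (v : X) : Prop :=
  v ≠ 0 ∧ ∃ x₀ : X,
    (∀ t : ℝ, 0 ≤ t → x₀ + t • v ∉ interior C) ∧
    Filter.Tendsto (fun t : ℝ => Metric.infDist (x₀ + t • v) C) Filter.atTop (nhds 0)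

/-- An unbounded closed convex set in a finite-dimensional normed space contains a ray. -/
lemma exists_ray_aux {X : Type*} [NormedAddCommGroup X] [NormedSpace ℝ X]
    [FiniteDimensional ℝ X] {S : Set X} (hS : IsClosed S) (hc : Convex ℝ S)
    (hub : ¬ Bornology.IsBounded S) :
    ∃ x ∈ S, ∃ v : X, ‖v‖ = 1 ∧ ∀ t : ℝ, 0 ≤ t → x + t • v ∈ S := by
  have hbig : ∀ R : ℝ, ∃ y ∈ S, R < ‖y‖ := by
    intro R
    by_contra hcon
    push_neg at hcon
    exact hub (isBounded_iff_forall_norm_le.2 ⟨R, hcon⟩)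
  obtain ⟨x, hxS, -⟩ := hbig 0
  have hy : ∀ n : ℕ, ∃ y ∈ S, (n : ℝ) + ‖x‖ < ‖y‖ := fun n => hbig _
  choose y hyS hylt using hy
  set r : ℕ → ℝ := fun n => ‖y n - x‖ with hr
  have hrn : ∀ n : ℕ, (n : ℝ) < r n := by
    intro n
    have h1 := norm_sub_norm_le (y n) x
    have h2 := hylt n
    simp only [hr]
    linarith
  have hrpos : ∀ n, 0 < r n := fun n => lt_of_le_of_lt (Nat.cast_nonneg n) (hrn n)
  set u : ℕ → X := fun n => (r n)⁻¹ • (y n - x) with hu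
  have husph : ∀ n, u n ∈ sphere (0:X) 1 := by
    intro n
    simp only [hu, mem_sphere_iff_norm, sub_zero, norm_smul, norm_inv, Real.norm_eq_abs,
      abs_of_pos (hrpos n)]
    exact inv_mul_cancel₀ (ne_of_gt (hrpos n))
  obtain ⟨v, hvmem, φ, hφ, hφt⟩ := (isCompact_sphere (0:X) 1).tendsto_subseq husph
  refine ⟨x, hxS, v, by simpa using hvmem, ?_⟩
  intro t ht
  have hmem : ∀ᶠ k in atTop, x + t • u (φ k) ∈ S := by
    filter_upwards [eventually_ge_atTop ⌈t⌉₊] with k hk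
    have hk' : t ≤ r (φ k) := by
      have h1 : (⌈t⌉₊ : ℝ) ≤ (k : ℝ) := Nat.cast_le.2 hk
      have h2 : (k : ℝ) ≤ (φ k : ℝ) := Nat.cast_le.2 hφ.le_apply
      have h3 := hrn (φ k)
      have h4 : t ≤ (⌈t⌉₊ : ℝ) := Nat.le_ceil t
      linarith
    have heq : x + t • u (φ k) = x + (t * (r (φ k))⁻¹) • (y (φ k) - x) := by
      rw [hu, smul_smul]
    rw [heq]
    refine hc.add_smul_sub_mem hxS (hyS (φ k)) ⟨by positivity, ?_⟩
    rw [← div_eq_mul_inv, div_le_one (hrpos _)]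
    exact hk'
  have hlim : Tendsto (fun k => x + t • u (φ k)) atTop (𝓝 (x + t • v)) :=
    tendsto_const_nhds.add (hφt.const_smul t)
  exact hS.mem_of_tendsto hlim hmem

theorem stmt_7 {X : Type*} [NormedAddCommGroup X] [NormedSpace ℝ X]
    [FiniteDimensional ℝ X] (hd : 2 ≤ Module.finrank ℝ X)
    (C : Set X) (hclosed : IsClosed C) (hconv : Convex ℝ C) (hne : C ≠ Set.univ)
    (hint : (interior C).Nonempty) (hunb : ¬ Bornology.IsBounded C)
    (hnoasym : ∀ v : X, ¬ IsAsymptoticDir C v)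
    (h : X →L[ℝ] ℝ) (hh : h ≠ 0) (hbdd : BddBelow (h '' C)) :
    ∀ α : ℝ, Bornology.IsBounded {x ∈ C | h x ≤ α} := by
  intro α
  by_contra hub
  obtain ⟨β, hβ⟩ := hbdd
  have hβ' : ∀ c ∈ C, β ≤ h c := fun c hc => hβ ⟨c, hc, rfl⟩
  have hSclosed : IsClosed {x ∈ C | h x ≤ α} :=
    hclosed.inter (isClosed_le h.continuous continuous_const)
  have hSconv : Convex ℝ {x ∈ C | h x ≤ α} :=
    hconv.inter (convex_halfSpace_le ⟨fun a b => h.map_add a b, fun c a => h.map_smul c a⟩ α)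
  obtain ⟨x, hxS, v, hv1, hray⟩ := exists_ray_aux hSclosed hSconv hub
  have hvne : v ≠ 0 := by
    intro h0; rw [h0, norm_zero] at hv1; norm_num at hv1
  have hxC : x ∈ C := hxS.1
  have hxα : h x ≤ α := hxS.2
  -- h v = 0
  have hvle : h v ≤ 0 := by
    by_contra hpos
    push_neg at hpos
    set t := (α - h x + 1) / h v with htdef
    have htpos : 0 ≤ t := div_nonneg (by linarith) hpos.le
    have hm := (hray t htpos).2
    rw [map_add, map_smul, smul_eq_mul, htdef, div_mul_cancel₀ _ (ne_of_gt hpos)] at hm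
    linarith
  have hvge : 0 ≤ h v := by
    by_contra hneg
    push_neg at hneg
    set t := (h x - β + 1) / (-h v) with htdef
    have htpos : 0 ≤ t := div_nonneg (by linarith [hβ' x hxC]) (by linarith)
    have hm := hβ' _ (hray t htpos).1
    have hne0 : h v ≠ 0 := ne_of_lt hneg
    have ht' : t * h v = -(h x - β + 1) := by
      rw [htdef, div_neg, neg_mul, div_mul_cancel₀ _ hne0]
    rw [map_add, map_smul, smul_eq_mul, ht'] at hm
    linarith
  have hv0 : h v = 0 := le_antisymm hvle hvge
  -- v is a recession direction of C
  have hrec : ∀ c ∈ C, ∀ t : ℝ, 0 ≤ t → c + t • v ∈ C := by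
    intro c hc t ht
    have hseq : ∀ n : ℕ, ((n:ℝ) + 1) ≥ t →
        c + (t / ((n:ℝ)+1)) • ((x + ((n:ℝ)+1) • v) - c) ∈ C := by
      intro n hn
      refine hconv.add_smul_sub_mem hc ((hray ((n:ℝ)+1) (by positivity)).1) ⟨by positivity, ?_⟩
      rw [div_le_one (by positivity)]
      exact hn
    have heq : ∀ n : ℕ, c + (t / ((n:ℝ)+1)) • ((x + ((n:ℝ)+1) • v) - c)
        = (c + t • v) + (t / ((n:ℝ)+1)) • (x - c) := by
      intro n
      have hne' : ((n:ℝ)+1) ≠ 0 := by positivity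
      have h9 : (1:ℝ) + (n:ℝ) ≠ 0 := by positivity
      match_scalars
      · ring
      · ring
      · rw [mul_one, mul_one, div_mul_cancel₀ _ hne']
    have h1 : Tendsto (fun n : ℕ => t / ((n:ℝ)+1)) atTop (𝓝 0) := by
      have : Tendsto (fun n : ℕ => 1 / ((n : ℝ) + 1)) atTop (𝓝 0) :=
        tendsto_one_div_add_atTop_nhds_zero_nat
      have h2 := this.const_mul t
      simpa [div_eq_mul_inv, mul_comm, mul_assoc, one_div] using h2
    have hlim : Tendsto (fun n : ℕ => (c + t • v) + (t / ((n:ℝ)+1)) • (x - c)) atTop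
        (𝓝 (c + t • v)) := by
      have h2 : Tendsto (fun n : ℕ => (t / ((n:ℝ)+1)) • (x - c)) atTop (𝓝 (0 : X)) := by
        have := h1.smul_const (x - c)
        simpa using this
      have h3 : Tendsto (fun n : ℕ => (c + t • v) + (t / ((n:ℝ)+1)) • (x - c)) atTop
          (𝓝 ((c + t • v) + 0)) := Tendsto.add tendsto_const_nhds h2
      simpa using h3
    refine hclosed.mem_of_tendsto hlim ?_
    filter_upwards [eventually_ge_atTop ⌈t⌉₊] with n hn
    have hn' : ((n:ℝ)+1) ≥ t := by
      have h1' : (⌈t⌉₊ : ℝ) ≤ (n : ℝ) := Nat.cast_le.2 hn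
      have h4 : t ≤ (⌈t⌉₊ : ℝ) := Nat.le_ceil t
      linarith
    rw [← heq n]
    exact hseq n hn'
  -- the set D = closure (C - ℝ₊ v)
  set E : Set X := {z | ∃ c ∈ C, ∃ s : ℝ, 0 ≤ s ∧ z = c - s • v} with hE
  set D := closure E with hD
  have hCE : C ⊆ E := fun c hc => ⟨c, hc, 0, le_refl 0, by simp⟩
  have hCD : C ⊆ D := hCE.trans subset_closure
  have hDlower : D ⊆ {z | β ≤ h z} := by
    apply closure_minimal _ (isClosed_le continuous_const h.continuous)
    rintro z ⟨c, hc, s, hs, rfl⟩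
    simp only [mem_setOf_eq, map_sub, map_smul, smul_eq_mul, hv0, mul_zero, sub_zero]
    exact hβ' c hc
  have hDne : D.Nonempty := ⟨x, hCD hxC⟩
  have hDnuniv : D ≠ univ := by
    obtain ⟨w, hw⟩ := DFunLike.ne_iff.1 hh
    have hw' : h w ≠ 0 := by simpa using hw
    intro hDuniv
    have hmem : (((β - 1) / h w) • w) ∈ D := hDuniv ▸ mem_univ _
    have := hDlower hmem
    rw [mem_setOf_eq, map_smul, smul_eq_mul, div_mul_cancel₀ _ hw'] at this
    linarith
  have hDshift : ∀ d ∈ D, ∀ s : ℝ, 0 ≤ s → d - s • v ∈ D := by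
    intro d hd s hs
    refine map_mem_closure (f := fun z => z - s • v) (by fun_prop) hd ?_
    rintro z ⟨c, hc, s', hs', rfl⟩
    exact ⟨c, hc, s' + s, by linarith, by rw [add_smul]; abel⟩
  haveI : PreconnectedSpace X := ⟨(convex_univ : Convex ℝ (univ : Set X)).isPreconnected⟩
  have hq : ∃ q ∈ D, q ∉ interior D := by
    by_contra hcon
    push_neg at hcon
    have hopen : IsOpen D := by
      rw [← subset_interior_iff_isOpen]
      exact hcon
    rcases isClopen_iff.1 ⟨isClosed_closure, hopen⟩ with h1 | h2
    · exact hDne.ne_empty h1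
    · exact hDnuniv h2
  obtain ⟨q, hqD, hqint⟩ := hq
  refine hnoasym v ⟨hvne, q, ?_, ?_⟩
  · -- the ray avoids the interior of C
    intro t ht hmem
    have h2 : q + t • v ∈ interior D := interior_mono hCD hmem
    apply hqint
    have hU : IsOpen ((fun z => z + t • v) ⁻¹' (interior D)) :=
      isOpen_interior.preimage (by fun_prop)
    have hsub : ((fun z => z + t • v) ⁻¹' (interior D)) ⊆ D := by
      intro z hz
      have := hDshift _ (interior_subset hz) t ht
      simpa using this
    exact interior_maximal hsub hU (Set.mem_preimage.2 h2)
  · -- the distance to C tends to 0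
    rw [Metric.tendsto_nhds]
    intro ε hε
    obtain ⟨e, heE, hde⟩ := Metric.mem_closure_iff.1 hqD ε hε
    obtain ⟨c, hc, s, hs, rfl⟩ := heE
    rw [eventually_atTop]
    refine ⟨s, fun t hts => ?_⟩
    have hmem : c + (t - s) • v ∈ C := hrec c hc (t - s) (by linarith)
    have hle : infDist (q + t • v) C ≤ dist (q + t • v) (c + (t - s) • v) :=
      infDist_le_dist_of_mem hmem
    have heq : dist (q + t • v) (c + (t - s) • v) = dist q (c - s • v) := by
      rw [dist_eq_norm, dist_eq_norm]
      congr 1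
      module
    rw [Real.dist_eq, sub_zero, abs_of_nonneg infDist_nonneg]
    calc infDist (q + t • v) C ≤ dist (q + t • v) (c + (t - s) • v) := hle
      _ = dist q (c - s • v) := heq
      _ < ε := hde
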